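/- The number of nilpotent partial transformations on [n] whose domain has exactly k elements equals C(n-1, k) · n^k. -/

import Mathlib

/-- Iterate of a partial transformation on `Fin n`. -/
def iterPT {n : ℕ} (f : Fin n → Option (Fin n)) : ℕ → Fin n → Option (Fin n)
  | 0 => fun x => some x
  | k + 1 => fun x => (f x).bind (iterPT f k)

/-- A partial transformation is nilpotent iff its digraph has no directed cycle. -/
def Nilp {n : ℕ} (f : Fin n → Option (Fin n)) : Prop :=
  ∀ (x : Fin n) (k : ℕ), 0 < k → iterPT f k x ≠ some x

/-- Cardinality of the domain of a partial transformation. -/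
def domcard {n : ℕ} (f : Fin n → Option (Fin n)) : ℕ :=
  (Finset.univ.filter fun i => (f i).isSome).card

/-- Conjugation action of the symmetric group on partial transformations. -/
def conjPT {n : ℕ} (w : Equiv.Perm (Fin n)) (f : Fin n → Option (Fin n)) :
    Fin n → Option (Fin n) := fun x => (f (w⁻¹ x)).map w

set_option linter.unusedSectionVars false

lemma iterPT_add {n : ℕ} (f : Fin n → Option (Fin n)) (a b : ℕ) (x : Fin n) :
    iterPT f (a + b) x = (iterPT f a x).bind (iterPT f b) := by
  induction a generalizing x with
  | zero => simp [iterPT]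
  | succ a ih =>
    rw [show a + 1 + b = (a + b) + 1 from by ring]
    show (f x).bind (iterPT f (a+b)) = _
    simp only [iterPT, Option.bind_assoc]
    cases f x with
    | none => simp
    | some y => simp [ih]

lemma iterPT_one {n : ℕ} (f : Fin n → Option (Fin n)) (x : Fin n) :
    iterPT f 1 x = f x := by
  simp only [iterPT]
  cases f x <;> simp

lemma iterPT_isSome_of_le {n : ℕ} {f : Fin n → Option (Fin n)} {a b : ℕ} {x z : Fin n}
    (hab : a ≤ b) (h : iterPT f b x = some z) : (iterPT f a x).isSome := by
  obtain ⟨c, rfl⟩ := Nat.exists_eq_add_of_le hab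
  rw [iterPT_add] at h
  cases hx : iterPT f a x with
  | none => rw [hx] at h; simp at h
  | some y => simp

open Finset

variable {n : ℕ}

/-- domain as a finset -/
def domPT (f : Fin n → Option (Fin n)) : Finset (Fin n) :=
  Finset.univ.filter fun i => (f i).isSome

/-- f extends the partial permutation (S, π) -/
def ExtPT (f : Fin n → Option (Fin n)) (p : Finset (Fin n) × Equiv.Perm (Fin n)) : Prop :=
  p.2.support ⊆ p.1 ∧ ∀ s ∈ p.1, f s = some (p.2 s)

instance (f : Fin n → Option (Fin n)) (p : Finset (Fin n) × Equiv.Perm (Fin n)) :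
    Decidable (ExtPT f p) := by unfold ExtPT; infer_instance

lemma perm_maps_to {S : Finset (Fin n)} {π : Equiv.Perm (Fin n)} (hs : π.support ⊆ S)
    {s : Fin n} (h : s ∈ S) : π s ∈ S := by
  by_cases hm : π s ∈ π.support
  · exact hs hm
  · have h2 : π (π s) = π s := Equiv.Perm.notMem_support.mp hm
    rwa [π.injective h2]

lemma iterPT_of_ext {f : Fin n → Option (Fin n)} {S : Finset (Fin n)} {π : Equiv.Perm (Fin n)}
    (hs : π.support ⊆ S) (he : ∀ s ∈ S, f s = some (π s)) {s : Fin n} (h : s ∈ S) (m : ℕ) :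
    iterPT f m s = some ((π ^ m) s) := by
  induction m generalizing s with
  | zero => simp [iterPT]
  | succ m ih =>
    show (f s).bind (iterPT f m) = _
    rw [he s h, Option.bind_some, ih (perm_maps_to hs h), pow_succ]
    rfl

lemma ext_eq_of_nilp {f : Fin n → Option (Fin n)} (hf : Nilp f)
    {p : Finset (Fin n) × Equiv.Perm (Fin n)} (hp : ExtPT f p) : p = (∅, 1) := by
  obtain ⟨S, π⟩ := p
  obtain ⟨hs, he⟩ := hp
  have hS : S = ∅ := by
    by_contra h
    obtain ⟨s, hsS⟩ := Finset.nonempty_iff_ne_empty.mpr h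
    have := iterPT_of_ext hs he hsS (orderOf π)
    rw [pow_orderOf_eq_one] at this
    exact hf s (orderOf π) (orderOf_pos π) (by simpa using this)
  subst hS
  have : π = 1 := by
    rw [← Equiv.Perm.support_eq_empty_iff]
    exact Finset.subset_empty.mp hs
  simp [this]

section Cycle

variable {f : Fin n → Option (Fin n)} {x : Fin n} {m : ℕ}
  (hm : 0 < m) (hcyc : iterPT f m x = some x)
  (hmin : ∀ j, 0 < j → j < m → iterPT f j x ≠ some x)

/-- the orbit function -/
noncomputable def orb (f : Fin n → Option (Fin n)) (x : Fin n) (j : ℕ) : Fin n :=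
  (iterPT f j x).getD x

include hcyc in
lemma ho : ∀ j ≤ m, iterPT f j x = some (orb f x j) := by
  intro j hj
  have := iterPT_isSome_of_le hj hcyc
  rw [orb]
  cases h : iterPT f j x with
  | none => rw [h] at this; simp at this
  | some y => simp

include hcyc in
lemma orb_zero : orb f x 0 = x := by simp [orb, iterPT]

include hcyc in
lemma orb_m : orb f x m = x := by simp [orb, hcyc]

include hcyc in
lemma hstep : ∀ j < m, f (orb f x j) = some (orb f x (j + 1)) := by
  intro j hj
  have h1 : iterPT f (j + 1) x = some (orb f x (j+1)) := ho hcyc (j+1) hj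
  rw [iterPT_add, ho hcyc j (le_of_lt hj), Option.bind_some, iterPT_one] at h1
  exact h1

include hcyc hmin in
lemma orb_ne : ∀ i j, i < j → j < m → orb f x i ≠ orb f x j := by
  intro i j hij hjm h
  have hj : iterPT f j x = some (orb f x j) := ho hcyc j (le_of_lt hjm)
  have h2 : iterPT f (m - j) (orb f x j) = some x := by
    have : iterPT f (j + (m - j)) x = some x := by rw [Nat.add_sub_cancel' (le_of_lt hjm)]; exact hcyc
    rw [iterPT_add, hj, Option.bind_some] at this
    exact this
  have h3 : iterPT f (i + (m - j)) x = some x := by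
    rw [iterPT_add, ho hcyc i (by omega), Option.bind_some, h, h2]
  exact hmin (i + (m - j)) (by omega) (by omega) h3

include hcyc hmin in
lemma orb_inj : ∀ i j, i < m → j < m → orb f x i = orb f x j → i = j := by
  intro i j him hjm h
  rcases lt_trichotomy i j with h1 | h1 | h1
  · exact absurd h (orb_ne hcyc hmin i j h1 hjm)
  · exact h1
  · exact absurd h.symm (orb_ne hcyc hmin j i h1 him)

/-- the cycle as a finset -/
noncomputable def Zc (f : Fin n → Option (Fin n)) (x : Fin n) (m : ℕ) : Finset (Fin n) :=
  (Finset.range m).image (orb f x)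

include hm in
lemma x_mem_Zc : x ∈ Zc f x m := by
  rw [Zc]
  exact Finset.mem_image.mpr ⟨0, Finset.mem_range.mpr hm, by simp [orb, iterPT]⟩

include hcyc hmin in
lemma card_Zc : (Zc f x m).card = m := by
  rw [Zc, Finset.card_image_of_injOn, Finset.card_range]
  intro i hi j hj h
  exact orb_inj hcyc hmin i j (by simpa using hi) (by simpa using hj) h

/-- the cycle function -/
noncomputable def gc (f : Fin n → Option (Fin n)) (x : Fin n) (m : ℕ) : Fin n → Fin n :=
  fun y => if y ∈ Zc f x m then (f y).getD y else y

include hm hcyc in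
lemma gc_orb : ∀ j < m, gc f x m (orb f x j) = orb f x (j + 1) := by
  intro j hj
  have hmem : orb f x j ∈ Zc f x m := Finset.mem_image.mpr ⟨j, Finset.mem_range.mpr hj, rfl⟩
  rw [gc, if_pos hmem, hstep hcyc j hj]
  rfl

lemma gc_not_mem {y : Fin n} (hy : y ∉ Zc f x m) : gc f x m y = y := by
  rw [gc, if_neg hy]

include hm hcyc in
lemma orb_mem_Zc : ∀ j ≤ m, orb f x j ∈ Zc f x m := by
  intro j hj
  rcases eq_or_lt_of_le hj with rfl | hj
  · rw [orb_m hcyc]; exact x_mem_Zc hm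
  · exact Finset.mem_image.mpr ⟨j, Finset.mem_range.mpr hj, rfl⟩

include hm hcyc in
lemma gc_surj : Function.Surjective (gc f x m) := by
  intro y
  by_cases hy : y ∈ Zc f x m
  · obtain ⟨j, hj, rfl⟩ := Finset.mem_image.mp hy
    rw [Finset.mem_range] at hj
    rcases Nat.eq_zero_or_pos j with rfl | hpos
    · exact ⟨orb f x (m-1), by rw [gc_orb hm hcyc (m-1) (by omega), Nat.sub_add_cancel hm,
        orb_m hcyc, orb_zero hcyc]⟩
    · exact ⟨orb f x (j-1), by rw [gc_orb hm hcyc (j-1) (by omega), Nat.sub_add_cancel hpos]⟩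
  · exact ⟨y, gc_not_mem hy⟩

include hm hcyc in
lemma gc_bij : Function.Bijective (gc f x m) :=
  ⟨Finite.injective_iff_surjective.mpr (gc_surj hm hcyc), gc_surj hm hcyc⟩

/-- the cycle permutation -/
noncomputable def cperm (hm : 0 < m) (hcyc : iterPT f m x = some x) : Equiv.Perm (Fin n) :=
  Equiv.ofBijective (gc f x m) (gc_bij hm hcyc)

lemma cperm_apply (y : Fin n) : cperm hm hcyc y = gc f x m y := rfl

lemma cperm_mem {y : Fin n} (hy : y ∈ Zc f x m) : cperm hm hcyc y ∈ Zc f x m := by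
  obtain ⟨j, hj, rfl⟩ := Finset.mem_image.mp hy
  rw [Finset.mem_range] at hj
  rw [cperm_apply, gc_orb hm hcyc j hj]
  exact orb_mem_Zc hm hcyc (j+1) hj

lemma cperm_support : (cperm hm hcyc).support ⊆ Zc f x m := by
  intro y hy
  by_contra h
  exact Equiv.Perm.mem_support.mp hy (gc_not_mem h)

lemma cperm_inv_not_mem {y : Fin n} (hy : y ∉ Zc f x m) : (cperm hm hcyc)⁻¹ y = y := by
  have : cperm hm hcyc y = y := gc_not_mem hy
  nth_rewrite 1 [← this]
  simp

lemma cperm_inv_mem {y : Fin n} (hy : y ∈ Zc f x m) : (cperm hm hcyc)⁻¹ y ∈ Zc f x m := by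
  by_contra h
  have h2 : cperm hm hcyc ((cperm hm hcyc)⁻¹ y) = (cperm hm hcyc)⁻¹ y := gc_not_mem h
  rw [show ∀ (σ : Equiv.Perm (Fin n)) z, σ (σ⁻¹ z) = z from fun σ z => σ.apply_symm_apply z] at h2
  rw [← h2] at h
  exact h hy

lemma cperm_pow : ∀ i ≤ m, ((cperm hm hcyc) ^ i) x = orb f x i := by
  intro i hi
  induction i with
  | zero => simp [orb_zero hcyc]
  | succ i ih =>
    rw [pow_succ', Equiv.Perm.mul_apply, ih (by omega), cperm_apply, gc_orb hm hcyc i (by omega)]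

end Cycle

section CycleSign

variable {f : Fin n → Option (Fin n)} {x : Fin n} {m : ℕ}
  (hm : 0 < m) (hcyc : iterPT f m x = some x)
  (hmin : ∀ j, 0 < j → j < m → iterPT f j x ≠ some x)

include hmin in
lemma cperm_support_eq (h2 : 2 ≤ m) : (cperm hm hcyc).support = Zc f x m := by
  apply Finset.Subset.antisymm (cperm_support hm hcyc)
  intro y hy
  obtain ⟨j, hj, rfl⟩ := Finset.mem_image.mp hy
  rw [Finset.mem_range] at hj
  rw [Equiv.Perm.mem_support, cperm_apply, gc_orb hm hcyc j hj]
  rcases eq_or_lt_of_le (Nat.succ_le_of_lt hj) with he | hl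
  · intro hc
    rw [(by omega : j + 1 = m), orb_m hcyc] at hc
    have := orb_inj hcyc hmin 0 j hm hj (by rw [orb_zero hcyc]; exact hc)
    omega
  · intro hc
    have := orb_inj hcyc hmin (j+1) j hl hj hc
    omega

include hmin in
lemma cperm_isCycle (h2 : 2 ≤ m) : (cperm hm hcyc).IsCycle := by
  refine ⟨x, ?_, ?_⟩
  · intro hc
    rw [cperm_apply] at hc
    have h0 : gc f x m (orb f x 0) = orb f x 1 := gc_orb hm hcyc 0 hm
    rw [orb_zero hcyc] at h0
    have := orb_inj hcyc hmin 1 0 h2 hm (by rw [← h0, hc, orb_zero hcyc])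
    omega
  · intro z hz
    have hz' : z ∈ Zc f x m := by
      by_contra h
      exact hz (gc_not_mem h)
    obtain ⟨j, hj, rfl⟩ := Finset.mem_image.mp hz'
    rw [Finset.mem_range] at hj
    exact ⟨(j : ℤ), by rw [zpow_natCast, cperm_pow hm hcyc j (le_of_lt hj)]⟩

include hmin in
lemma cperm_eq_one (h1 : m = 1) : cperm hm hcyc = 1 := by
  refine Equiv.ext fun y => ?_
  show gc f x m y = y
  by_cases hy : y ∈ Zc f x m
  · obtain ⟨j, hj, rfl⟩ := Finset.mem_image.mp hy
    rw [Finset.mem_range, h1, Nat.lt_one_iff] at hj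
    subst hj
    rw [gc_orb hm hcyc 0 hm, orb_zero hcyc]
    have hmm := orb_m (f := f) (x := x) hcyc
    rw [h1] at hmm
    simpa using hmm
  · exact gc_not_mem hy

include hmin in
lemma cperm_sign : (Equiv.Perm.sign (cperm hm hcyc) : ℤ) = (-1) ^ (m - 1) := by
  rcases eq_or_lt_of_le (Nat.succ_le_of_lt hm) with h1 | h2
  · rw [cperm_eq_one hm hcyc hmin h1.symm, ← h1]
    simp
  · rw [(cperm_isCycle hm hcyc hmin h2).sign, cperm_support_eq hm hcyc hmin h2,
      card_Zc hcyc hmin]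
    obtain ⟨t, rfl⟩ : ∃ t, m = t + 1 := ⟨m - 1, by omega⟩
    push_cast
    ring

end CycleSign

section Invol

variable {f : Fin n → Option (Fin n)} {x : Fin n} {m : ℕ}
  (hm : 0 < m) (hcyc : iterPT f m x = some x)
  (hmin : ∀ j, 0 < j → j < m → iterPT f j x ≠ some x)

include hm hcyc in
lemma ext_closed {S : Finset (Fin n)} {π : Equiv.Perm (Fin n)} (hp : ExtPT f (S, π))
    {z : Fin n} (hz : z ∈ Zc f x m) (hzS : z ∈ S) : Zc f x m ⊆ S := by
  obtain ⟨hs, he⟩ := hp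
  have forward : ∀ j < m, orb f x j ∈ S → orb f x (j+1) ∈ S := by
    intro j hj hjS
    have h1 : f (orb f x j) = some (orb f x (j+1)) := hstep hcyc j hj
    have h2 : f (orb f x j) = some (π (orb f x j)) := he _ hjS
    rw [h1] at h2
    rw [Option.some_inj] at h2
    rw [h2]
    exact perm_maps_to hs hjS
  have stepd : ∀ d j, j + d ≤ m → orb f x j ∈ S → orb f x (j + d) ∈ S := by
    intro d
    induction d with
    | zero => intro j _ h; exact h
    | succ d ih =>
      intro j hjd hj
      have := forward (j + d) (by omega) (ih j (by omega) hj)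
      rwa [show j + (d+1) = (j+d)+1 from by omega]
  obtain ⟨j, hj, rfl⟩ := Finset.mem_image.mp hz
  rw [Finset.mem_range] at hj
  have hxS : x ∈ S := by
    have := stepd (m - j) j (by omega) hzS
    rwa [show j + (m - j) = m from by omega, orb_m hcyc] at this
  intro y hy
  obtain ⟨i, hi, rfl⟩ := Finset.mem_image.mp hy
  rw [Finset.mem_range] at hi
  have := stepd i 0 (by omega) (by rw [orb_zero hcyc]; exact hxS)
  rwa [zero_add] at this

include hmin in
lemma pi_eq_cperm {S : Finset (Fin n)} {π : Equiv.Perm (Fin n)} (hp : ExtPT f (S, π))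
    (hZS : Zc f x m ⊆ S) {z : Fin n} (hz : z ∈ Zc f x m) : π z = cperm hm hcyc z := by
  obtain ⟨j, hj, rfl⟩ := Finset.mem_image.mp hz
  rw [Finset.mem_range] at hj
  have h1 : f (orb f x j) = some (orb f x (j+1)) := hstep hcyc j hj
  have h2 : f (orb f x j) = some (π (orb f x j)) := hp.2 _ (hZS hz)
  rw [h1, Option.some_inj] at h2
  rw [cperm_apply, gc_orb hm hcyc j hj]
  exact h2.symm

lemma neg_one_pow_sub_aux {a b : ℕ} (h1 : 1 ≤ b) (h2 : b ≤ a) :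
    ((-1 : ℤ)) ^ (a - b) * (-1) ^ (b - 1) = -(-1) ^ a := by
  obtain ⟨t, rfl⟩ := Nat.exists_eq_add_of_le h2
  obtain ⟨u, rfl⟩ := Nat.exists_eq_add_of_le h1
  rw [Nat.add_sub_cancel_left, Nat.add_sub_cancel_left]
  rw [pow_add, pow_add]
  ring

lemma neg_one_pow_add_aux {a b : ℕ} (h1 : 1 ≤ b) :
    ((-1 : ℤ)) ^ (a + b) * (-1) ^ (b - 1) = -(-1) ^ a := by
  obtain ⟨u, rfl⟩ := Nat.exists_eq_add_of_le h1
  rw [Nat.add_sub_cancel_left, pow_add, pow_add]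
  have h : ((-1 : ℤ)) ^ u * (-1) ^ u = 1 := by
    rw [← pow_add, ← two_mul, pow_mul]
    norm_num
  linear_combination (-(-1 : ℤ) ^ a) * h

include hm hcyc hmin in
lemma sum_ext_eq_zero :
    ∑ p ∈ Finset.univ.filter (ExtPT f),
      ((-1 : ℤ) ^ p.1.card * (Equiv.Perm.sign p.2 : ℤ)) = 0 := by
  set c := cperm hm hcyc with hc
  set Z := Zc f x m with hZ
  have hcard : Z.card = m := card_Zc hcyc hmin
  have hxZ : x ∈ Z := x_mem_Zc hm
  have hsignc : (Equiv.Perm.sign c : ℤ) = (-1) ^ (m - 1) := cperm_sign hm hcyc hmin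
  apply Finset.sum_involution
    (fun p _ => if Z ⊆ p.1 then (p.1 \ Z, p.2 * c⁻¹) else (p.1 ∪ Z, p.2 * c))
  · -- sums to zero
    rintro ⟨S, π⟩ hp
    by_cases hZS : Z ⊆ S
    · simp only [if_pos hZS]
      have hmS : m ≤ S.card := hcard ▸ Finset.card_le_card hZS
      have h1 : (S \ Z).card = S.card - m := by rw [Finset.card_sdiff_of_subset hZS, hcard]
      have h2 : (Equiv.Perm.sign (π * c⁻¹) : ℤ) =
          (Equiv.Perm.sign π : ℤ) * (-1) ^ (m - 1) := by
        rw [map_mul, Equiv.Perm.sign_inv]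
        push_cast
        rw [hsignc]
      show (-1 : ℤ) ^ S.card * _ + (-1 : ℤ) ^ (S \ Z).card * _ = 0
      rw [h1, h2]
      have key : ((-1 : ℤ)) ^ (S.card - m) * (-1) ^ (m - 1) = -(-1) ^ S.card :=
        neg_one_pow_sub_aux hm hmS
      linear_combination (Equiv.Perm.sign π : ℤ) * key
    · simp only [if_neg hZS]
      have hdisj : Disjoint S Z := by
        rw [Finset.disjoint_right]
        intro z hz hzS
        rw [Finset.mem_filter] at hp
        exact hZS (ext_closed hm hcyc hp.2 hz hzS)
      have h1 : (S ∪ Z).card = S.card + m := by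
        rw [Finset.card_union_of_disjoint hdisj, hcard]
      have h2 : (Equiv.Perm.sign (π * c) : ℤ) =
          (Equiv.Perm.sign π : ℤ) * (-1) ^ (m - 1) := by
        rw [map_mul]
        push_cast
        rw [hsignc]
      show (-1 : ℤ) ^ S.card * _ + (-1 : ℤ) ^ (S ∪ Z).card * _ = 0
      rw [h1, h2]
      have key : ((-1 : ℤ)) ^ (S.card + m) * (-1) ^ (m - 1) = -(-1) ^ S.card :=
        neg_one_pow_add_aux hm
      linear_combination (Equiv.Perm.sign π : ℤ) * key
  · -- not a fixed point
    rintro ⟨S, π⟩ hp _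
    by_cases hZS : Z ⊆ S
    · simp only [if_pos hZS]
      intro h
      have := congrArg Prod.fst h
      simp only at this
      have hx : x ∈ S := hZS hxZ
      rw [← this] at hx
      exact (Finset.mem_sdiff.mp hx).2 hxZ
    · simp only [if_neg hZS]
      intro h
      have := congrArg Prod.fst h
      simp only at this
      have hx : x ∈ S ∪ Z := Finset.mem_union_right _ hxZ
      rw [this] at hx
      exact hZS (fun z hz => by
        rw [Finset.mem_filter] at hp
        exact ext_closed hm hcyc hp.2 hxZ hx hz)
  · -- stays in the set
    rintro ⟨S, π⟩ hp
    rw [Finset.mem_filter] at hp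
    obtain ⟨-, hs, he⟩ := hp
    by_cases hZS : Z ⊆ S
    · simp only [if_pos hZS]
      rw [Finset.mem_filter]
      refine ⟨Finset.mem_univ _, ?_, ?_⟩
      · -- support
        intro y hy
        rw [Equiv.Perm.mem_support] at hy
        rw [Finset.mem_sdiff]
        constructor
        · by_contra hyS
          have hyZ : y ∉ Z := fun h => hyS (hZS h)
          have h1 : c⁻¹ y = y := cperm_inv_not_mem hm hcyc hyZ
          have h2 : π y = y := Equiv.Perm.notMem_support.mp (fun h => hyS (hs h))
          exact hy (by rw [Equiv.Perm.mul_apply, h1, h2])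
        · intro hyZ
          have h1 : c⁻¹ y ∈ Z := cperm_inv_mem hm hcyc hyZ
          have h2 : π (c⁻¹ y) = c (c⁻¹ y) := pi_eq_cperm hm hcyc hmin ⟨hs, he⟩ hZS h1
          rw [show ∀ (σ : Equiv.Perm (Fin n)) z, σ (σ⁻¹ z) = z from fun σ z => σ.apply_symm_apply z] at h2
          exact hy (by rw [Equiv.Perm.mul_apply, h2])
      · -- extension
        intro s hsm
        rw [Finset.mem_sdiff] at hsm
        have h1 : c⁻¹ s = s := cperm_inv_not_mem hm hcyc hsm.2
        rw [Equiv.Perm.mul_apply, h1]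
        exact he s hsm.1
    · simp only [if_neg hZS]
      have hdisj : ∀ z ∈ Z, z ∉ S := by
        intro z hz hzS
        exact hZS (ext_closed hm hcyc ⟨hs, he⟩ hz hzS)
      rw [Finset.mem_filter]
      refine ⟨Finset.mem_univ _, ?_, ?_⟩
      · intro y hy
        rw [Equiv.Perm.mem_support] at hy
        rw [Finset.mem_union]
        by_contra hyn
        push_neg at hyn
        have h1 : c y = y := gc_not_mem hyn.2
        have h2 : π y = y := Equiv.Perm.notMem_support.mp (fun h => hyn.1 (hs h))
        exact hy (by rw [Equiv.Perm.mul_apply, h1, h2])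
      · intro s hsm
        rw [Finset.mem_union] at hsm
        rcases hsm with hsS | hsZ
        · have h1 : c s = s := gc_not_mem (hdisj s · hsS)
          rw [Equiv.Perm.mul_apply, h1]
          exact he s hsS
        · have h1 : c s ∈ Z := cperm_mem hm hcyc hsZ
          have h2 : π (c s) = c s :=
            Equiv.Perm.notMem_support.mp (fun h => hdisj _ h1 (hs h))
          rw [Equiv.Perm.mul_apply, h2]
          obtain ⟨j, hj, rfl⟩ := Finset.mem_image.mp hsZ
          rw [Finset.mem_range] at hj
          rw [hc, cperm_apply, gc_orb hm hcyc j hj]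
          exact hstep hcyc j hj
  · -- involution
    rintro ⟨S, π⟩ hp
    by_cases hZS : Z ⊆ S
    · simp only [if_pos hZS]
      have h1 : ¬ Z ⊆ S \ Z := fun h => (Finset.mem_sdiff.mp (h hxZ)).2 hxZ
      simp only [if_neg h1]
      rw [Prod.mk.injEq]
      exact ⟨Finset.sdiff_union_of_subset hZS, inv_mul_cancel_right π c⟩
    · simp only [if_neg hZS]
      have h1 : Z ⊆ S ∪ Z := Finset.subset_union_right
      simp only [if_pos h1]
      rw [Prod.mk.injEq]
      have hdisj : Disjoint S Z := by
        rw [Finset.disjoint_right]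
        intro z hz hzS
        rw [Finset.mem_filter] at hp
        exact hZS (ext_closed hm hcyc hp.2 hz hzS)
      constructor
      · rw [Finset.union_sdiff_right, Finset.sdiff_eq_self_iff_disjoint.mpr hdisj]
      · exact mul_inv_cancel_right π c

end Invol

section KeySum

variable {f : Fin n → Option (Fin n)}

lemma sum_ext_of_nilp (hf : Nilp f) :
    ∑ p ∈ Finset.univ.filter (ExtPT f),
      ((-1 : ℤ) ^ p.1.card * (Equiv.Perm.sign p.2 : ℤ)) = 1 := by
  have hset : Finset.univ.filter (ExtPT f) = {((∅ : Finset (Fin n)), (1 : Equiv.Perm (Fin n)))} := by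
    ext p
    simp only [Finset.mem_filter, Finset.mem_univ, true_and, Finset.mem_singleton]
    constructor
    · exact ext_eq_of_nilp hf
    · rintro rfl
      exact ⟨by simp, by simp⟩
  rw [hset, Finset.sum_singleton]
  simp

lemma sum_ext_of_not_nilp (hf : ¬ Nilp f) :
    ∑ p ∈ Finset.univ.filter (ExtPT f),
      ((-1 : ℤ) ^ p.1.card * (Equiv.Perm.sign p.2 : ℤ)) = 0 := by
  rw [Nilp] at hf
  push_neg at hf
  obtain ⟨x, k, hk, hx⟩ := hf
  have hex : ∃ j, 0 < j ∧ iterPT f j x = some x := ⟨k, hk, hx⟩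
  classical
  let m := Nat.find hex
  have hspec := Nat.find_spec hex
  exact sum_ext_eq_zero hspec.1 hspec.2
    (fun j hj hjm h => Nat.find_min hex hjm ⟨hj, h⟩)

lemma sign_sum_filter (S : Finset (Fin n)) :
    ∑ π ∈ Finset.univ.filter (fun π : Equiv.Perm (Fin n) => π.support ⊆ S),
      (Equiv.Perm.sign π : ℤ) = if S.card ≤ 1 then 1 else 0 := by
  by_cases hS : S.card ≤ 1
  · rw [if_pos hS]
    have hset : Finset.univ.filter (fun π : Equiv.Perm (Fin n) => π.support ⊆ S)
        = {(1 : Equiv.Perm (Fin n))} := by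
      ext π
      simp only [Finset.mem_filter, Finset.mem_univ, true_and, Finset.mem_singleton]
      constructor
      · intro h
        exact Equiv.Perm.card_support_le_one.mp (le_trans (Finset.card_le_card h) hS)
      · rintro rfl
        simp
    rw [hset, Finset.sum_singleton]
    simp
  · rw [if_neg hS]
    push_neg at hS
    obtain ⟨a, ha, b, hb, hab⟩ := Finset.one_lt_card.mp hS
    apply Finset.sum_involution (fun π _ => Equiv.swap a b * π)
    · intro π _
      rw [map_mul, Equiv.Perm.sign_swap hab]
      push_cast
      ring
    · intro π _ _
      intro h
      have : Equiv.swap a b = 1 := by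
        have := congrArg (· * π⁻¹) h
        simpa [mul_assoc] using this
      exact hab (by rw [← Equiv.swap_apply_left a b, this, Equiv.Perm.one_apply])
    · intro π hπ
      rw [Finset.mem_filter] at hπ ⊢
      refine ⟨Finset.mem_univ _, ?_⟩
      refine le_trans (Equiv.Perm.support_mul_le _ _) ?_
      rw [Equiv.Perm.support_swap hab]
      intro y hy
      rcases Finset.mem_union.mp hy with h | h
      · rcases Finset.mem_insert.mp h with rfl | h
        · exact ha
        · rw [Finset.mem_singleton.mp h]; exact hb
      · exact hπ.2 h
    · intro π _
      rw [← mul_assoc, Equiv.swap_mul_self, one_mul]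

end KeySum

section Count

variable {n : ℕ}

/-- build a partial transformation from prescribed data -/
def buildPT (S D : Finset (Fin n)) (π : Equiv.Perm (Fin n))
    (g : {i // i ∈ D \ S} → Fin n) : Fin n → Option (Fin n) :=
  fun i => if i ∈ S then some (π i) else if h : i ∈ D \ S then some (g ⟨i, h⟩) else none

lemma buildPT_dom {S D : Finset (Fin n)} {π : Equiv.Perm (Fin n)} (hSD : S ⊆ D)
    (g : {i // i ∈ D \ S} → Fin n) : domPT (buildPT S D π g) = D := by
  ext i
  rw [domPT, Finset.mem_filter]
  simp only [Finset.mem_univ, true_and, buildPT]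
  by_cases h1 : i ∈ S
  · simp [h1, hSD h1]
  · by_cases h2 : i ∈ D \ S
    · simp [h1, h2, (Finset.mem_sdiff.mp h2).1]
    · have h3 : i ∉ D := fun hD => h2 (Finset.mem_sdiff.mpr ⟨hD, h1⟩)
      simp [h1, h2, h3]

lemma buildPT_ext {S D : Finset (Fin n)} {π : Equiv.Perm (Fin n)} (hs : π.support ⊆ S)
    (g : {i // i ∈ D \ S} → Fin n) : ExtPT (buildPT S D π g) (S, π) :=
  ⟨hs, fun s hsS => by simp [buildPT, hsS]⟩

lemma count_ext (D S : Finset (Fin n)) (π : Equiv.Perm (Fin n))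
    (hs : π.support ⊆ S) (hSD : S ⊆ D) :
    (Finset.univ.filter fun f : Fin n → Option (Fin n) =>
      domPT f = D ∧ ExtPT f (S, π)).card = n ^ (D.card - S.card) := by
  have key : (Finset.univ.filter fun f : Fin n → Option (Fin n) =>
      domPT f = D ∧ ExtPT f (S, π)).card
      = Fintype.card {f : Fin n → Option (Fin n) // domPT f = D ∧ ExtPT f (S, π)} := by
    rw [Fintype.card_subtype]
  rw [key]
  have hget : ∀ (f : {f : Fin n → Option (Fin n) // domPT f = D ∧ ExtPT f (S, π)})
      (d : {i // i ∈ D \ S}), (f.1 d.1).isSome := by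
    intro f d
    have hd := Finset.mem_sdiff.mp d.2
    have h1 : d.1 ∈ domPT f.1 := by rw [f.2.1]; exact hd.1
    rw [domPT, Finset.mem_filter] at h1
    exact h1.2
  have e : {f : Fin n → Option (Fin n) // domPT f = D ∧ ExtPT f (S, π)}
      ≃ ({i // i ∈ D \ S} → Fin n) :=
    { toFun := fun f d => (f.1 d.1).get (hget f d)
      invFun := fun g => ⟨buildPT S D π g, buildPT_dom hSD g, buildPT_ext hs g⟩
      left_inv := by
        intro f
        apply Subtype.ext
        funext i
        show buildPT S D π (fun d => (f.1 d.1).get (hget f d)) i = f.1 i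
        rw [buildPT]
        by_cases h1 : i ∈ S
        · rw [if_pos h1, (f.2.2.2 i h1)]
        · rw [if_neg h1]
          by_cases h2 : i ∈ D \ S
          · rw [dif_pos h2]
            exact Option.some_get (hget f ⟨i, h2⟩)
          · rw [dif_neg h2]
            have h3 : i ∉ D := fun hD => h2 (Finset.mem_sdiff.mpr ⟨hD, h1⟩)
            have h4 : i ∉ domPT f.1 := by rw [f.2.1]; exact h3
            rw [domPT, Finset.mem_filter] at h4
            push_neg at h4
            have := h4 (Finset.mem_univ i)
            exact (Option.not_isSome_iff_eq_none.mp (by simpa using this)).symm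
      right_inv := by
        intro g
        funext d
        have hd := Finset.mem_sdiff.mp d.2
        have hbuild : buildPT S D π g d.1 = some (g d) := by
          rw [buildPT, if_neg hd.2, dif_pos d.2]
        simp only [hbuild, Option.get_some] }
  rw [Fintype.card_congr e, Fintype.card_fun, Fintype.card_coe, Fintype.card_fin,
    Finset.card_sdiff_of_subset hSD]

lemma count_ext_zero (D S : Finset (Fin n)) (π : Equiv.Perm (Fin n))
    (h : ¬ (π.support ⊆ S ∧ S ⊆ D)) :
    (Finset.univ.filter fun f : Fin n → Option (Fin n) =>
      domPT f = D ∧ ExtPT f (S, π)).card = 0 := by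
  rw [Finset.card_eq_zero, Finset.filter_eq_empty_iff]
  intro f _
  rintro ⟨hdom, hsupp, hext⟩
  apply h
  refine ⟨hsupp, fun s hsS => ?_⟩
  have h1 : (f s).isSome := by rw [hext s hsS]; rfl
  have h2 : s ∈ domPT f := by rw [domPT, Finset.mem_filter]; exact ⟨Finset.mem_univ s, h1⟩
  rw [hdom] at h2
  exact h2

end Count

noncomputable local instance nilpDec {n : ℕ} (f : Fin n → Option (Fin n)) :
    Decidable (Nilp f) := Classical.propDecidable _

section PerD

variable {n : ℕ}

lemma perD (D : Finset (Fin n)) :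
    ((Finset.univ.filter fun f : Fin n → Option (Fin n) => domPT f = D ∧ Nilp f).card : ℤ)
      = (n : ℤ) ^ D.card - D.card * (n : ℤ) ^ (D.card - 1) := by
  have h1 : ((Finset.univ.filter fun f : Fin n → Option (Fin n) =>
      domPT f = D ∧ Nilp f).card : ℤ)
      = ∑ f ∈ Finset.univ.filter (fun f : Fin n → Option (Fin n) => domPT f = D),
          (if Nilp f then (1 : ℤ) else 0) := by
    rw [Finset.sum_boole, Finset.filter_filter]
  rw [h1]
  have h2 : ∀ f : Fin n → Option (Fin n), (if Nilp f then (1 : ℤ) else 0)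
      = ∑ p ∈ Finset.univ.filter (ExtPT f),
          ((-1 : ℤ) ^ p.1.card * (Equiv.Perm.sign p.2 : ℤ)) := by
    intro f
    by_cases hf : Nilp f
    · rw [if_pos hf, sum_ext_of_nilp hf]
    · rw [if_neg hf, sum_ext_of_not_nilp hf]
  simp_rw [h2]
  have h3 : ∀ f : Fin n → Option (Fin n),
      (∑ p ∈ Finset.univ.filter (ExtPT f),
        ((-1 : ℤ) ^ p.1.card * (Equiv.Perm.sign p.2 : ℤ)))
      = ∑ p : Finset (Fin n) × Equiv.Perm (Fin n),
          (if ExtPT f p then ((-1 : ℤ) ^ p.1.card * (Equiv.Perm.sign p.2 : ℤ)) else 0) := by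
    intro f
    rw [Finset.sum_filter]
  simp_rw [h3]
  rw [Finset.sum_comm]
  have h4 : ∀ p : Finset (Fin n) × Equiv.Perm (Fin n),
      (∑ f ∈ Finset.univ.filter (fun f : Fin n → Option (Fin n) => domPT f = D),
        (if ExtPT f p then ((-1 : ℤ) ^ p.1.card * (Equiv.Perm.sign p.2 : ℤ)) else 0))
      = ((Finset.univ.filter fun f : Fin n → Option (Fin n) =>
            domPT f = D ∧ ExtPT f p).card : ℤ)
          * ((-1 : ℤ) ^ p.1.card * (Equiv.Perm.sign p.2 : ℤ)) := by
    intro p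
    rw [← Finset.sum_filter, Finset.sum_const, Finset.filter_filter, nsmul_eq_mul]
  simp_rw [h4]
  rw [Fintype.sum_prod_type]
  have h5 : ∀ S : Finset (Fin n),
      (∑ π : Equiv.Perm (Fin n),
        ((Finset.univ.filter fun f : Fin n → Option (Fin n) =>
            domPT f = D ∧ ExtPT f (S, π)).card : ℤ)
          * ((-1 : ℤ) ^ S.card * (Equiv.Perm.sign π : ℤ)))
      = if S ⊆ D ∧ S.card ≤ 1 then (-1 : ℤ) ^ S.card * (n : ℤ) ^ (D.card - S.card) else 0 := by
    intro S
    by_cases hSD : S ⊆ D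
    · have hcnt : ∀ π : Equiv.Perm (Fin n),
          ((Finset.univ.filter fun f : Fin n → Option (Fin n) =>
              domPT f = D ∧ ExtPT f (S, π)).card : ℤ)
          = if π.support ⊆ S then (n : ℤ) ^ (D.card - S.card) else 0 := by
        intro π
        by_cases hs : π.support ⊆ S
        · rw [if_pos hs, count_ext D S π hs hSD]
          push_cast
          ring
        · rw [if_neg hs, count_ext_zero D S π (fun h => hs h.1)]
          simp
      simp_rw [hcnt]
      rw [show (∑ π : Equiv.Perm (Fin n),
          (if π.support ⊆ S then (n : ℤ) ^ (D.card - S.card) else 0)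
            * ((-1 : ℤ) ^ S.card * (Equiv.Perm.sign π : ℤ)))
          = ∑ π : Equiv.Perm (Fin n), (if π.support ⊆ S then
              ((n : ℤ) ^ (D.card - S.card) * (-1 : ℤ) ^ S.card) * (Equiv.Perm.sign π : ℤ)
            else 0) from Finset.sum_congr rfl (fun π _ => by split_ifs <;> ring)]
      rw [← Finset.sum_filter, ← Finset.mul_sum, sign_sum_filter]
      by_cases hc : S.card ≤ 1
      · rw [if_pos hc, if_pos ⟨hSD, hc⟩]
        ring
      · rw [if_neg hc, if_neg (fun h => hc h.2)]
        ring
    · rw [if_neg (fun h => hSD h.1)]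
      apply Finset.sum_eq_zero
      intro π _
      rw [count_ext_zero D S π (fun h => hSD h.2)]
      simp
  simp_rw [h5]
  rw [← Finset.sum_filter]
  have h6 : Finset.univ.filter (fun S : Finset (Fin n) => S ⊆ D ∧ S.card ≤ 1)
      = insert ∅ (D.image fun a => {a}) := by
    ext S
    simp only [Finset.mem_filter, Finset.mem_univ, true_and, Finset.mem_insert,
      Finset.mem_image]
    constructor
    · rintro ⟨hSD, hc⟩
      interval_cases h : S.card
      · exact Or.inl (Finset.card_eq_zero.mp h)
      · obtain ⟨a, rfl⟩ := Finset.card_eq_one.mp h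
        exact Or.inr ⟨a, hSD (Finset.mem_singleton_self a), rfl⟩
    · rintro (rfl | ⟨a, ha, rfl⟩)
      · simp
      · simp [Finset.singleton_subset_iff, ha]
  rw [h6, Finset.sum_insert (by
    simp only [Finset.mem_image]
    rintro ⟨a, -, h⟩
    exact Finset.singleton_ne_empty a h),
    Finset.sum_image (fun a _ b _ h => Finset.singleton_injective h)]
  simp only [Finset.card_empty, Finset.card_singleton, pow_zero, one_mul, Nat.sub_zero,
    pow_one]
  rw [Finset.sum_const, nsmul_eq_mul]
  ring

end PerD

lemma arith_aux (n k : ℕ) :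
    Nat.choose n k * (n ^ k - k * n ^ (k - 1)) = Nat.choose (n - 1) k * n ^ k := by
  rcases k with _ | j
  · simp
  rcases n with _ | i
  · simp
  have e1 : (i+1) ^ (j+1) - (j+1) * (i+1) ^ j = ((i+1) - (j+1)) * (i+1) ^ j := by
    rw [Nat.sub_mul, pow_succ]
    ring_nf
  have e2 : Nat.choose (i+1) (j+1) * ((i+1) - (j+1)) = (i+1) * Nat.choose i (j+1) := by
    rw [← Nat.choose_succ_right_eq (i+1) (j+1)]
    rw [Nat.add_one_mul_choose_eq i (j+1)]
  calc Nat.choose (i+1) (j+1) * ((i+1) ^ (j+1) - (j+1) * (i+1) ^ j)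
      = Nat.choose (i+1) (j+1) * (((i+1) - (j+1)) * (i+1) ^ j) := by rw [e1]
    _ = (Nat.choose (i+1) (j+1) * ((i+1) - (j+1))) * (i+1) ^ j := by ring
    _ = ((i+1) * Nat.choose i (j+1)) * (i+1) ^ j := by rw [e2]
    _ = Nat.choose i (j+1) * (i+1) ^ (j+1) := by rw [pow_succ]; ring


/-- the number of nilpotent partial transformations on `[n]` whose
domain has exactly `k` elements is `C(n-1, k) * n^k`. -/
theorem stmt2 (n k : ℕ) :
    Nat.card {f : Fin n → Option (Fin n) // Nilp f ∧ domcard f = k} =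
      Nat.choose (n - 1) k * n ^ k := by
  rw [Nat.card_eq_fintype_card, Fintype.card_subtype]
  have hmem : ∀ f ∈ Finset.univ.filter
      (fun f : Fin n → Option (Fin n) => Nilp f ∧ domcard f = k),
      domPT f ∈ Finset.powersetCard k (Finset.univ : Finset (Fin n)) := by
    intro f hf
    rw [Finset.mem_filter] at hf
    rw [Finset.mem_powersetCard]
    exact ⟨Finset.subset_univ _, hf.2.2⟩
  rw [Finset.card_eq_sum_card_fiberwise hmem]
  have hfiber : ∀ D ∈ Finset.powersetCard k (Finset.univ : Finset (Fin n)),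
      ((Finset.univ.filter (fun f : Fin n → Option (Fin n) => Nilp f ∧ domcard f = k)).filter
        (fun f => domPT f = D)).card = n ^ k - k * n ^ (k - 1) := by
    intro D hD
    rw [Finset.mem_powersetCard] at hD
    have hset : (Finset.univ.filter
        (fun f : Fin n → Option (Fin n) => Nilp f ∧ domcard f = k)).filter
          (fun f => domPT f = D)
        = Finset.univ.filter (fun f => domPT f = D ∧ Nilp f) := by
      ext f
      simp only [Finset.mem_filter, Finset.mem_univ, true_and]
      constructor
      · rintro ⟨⟨h1, h2⟩, h3⟩
        exact ⟨h3, h1⟩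
      · rintro ⟨h1, h2⟩
        refine ⟨⟨h2, ?_⟩, h1⟩
        show (domPT f).card = k
        rw [h1, hD.2]
    rw [hset]
    have hcard := perD D
    rw [hD.2] at hcard
    have hDn : k ≤ n := by
      have := Finset.card_le_univ D
      rw [hD.2] at this
      simpa using this
    have hle : k * n ^ (k - 1) ≤ n ^ k := by
      rcases k with _ | j
      · simp
      · calc (j+1) * n ^ j ≤ n * n ^ j := Nat.mul_le_mul_right _ hDn
          _ = n ^ (j+1) := by rw [pow_succ]; ring
    have h2 : ((n ^ k - k * n ^ (k - 1) : ℕ) : ℤ) = (n : ℤ) ^ k - k * (n : ℤ) ^ (k - 1) := by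
      rw [Nat.cast_sub hle]
      push_cast
      ring
    exact Nat.cast_inj.mp (hcard.trans h2.symm)
  rw [Finset.sum_congr rfl hfiber, Finset.sum_const, Finset.card_powersetCard,
    Finset.card_univ, Fintype.card_fin, smul_eq_mul, arith_aux]
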